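/- Suppose $\kappa, \tilde{\kappa}$ are smooth strictly convex log-Laplace transforms with critical parameters $\theta^* > \tilde{\theta}^*$, where $\theta^* \kappa'(\theta^*) - \kappa(\theta^*) = 0$ and $\tilde{\theta}^* \tilde{\kappa}'(\tilde{\theta}^*) - \tilde{\kappa}(\tilde{\theta}^*) = 0$. Let $t \in (0,1)$ and suppose $\theta > 0$ minimizes $\phi \mapsto (t\kappa(\phi) + (1-t)\tilde{\kappa}(\phi))/\phi$. Set $a = \kappa'(\theta)$ and $b = \tilde{\kappa}'(\theta)$. Then $\tilde{\theta}^* < \theta < \theta^*$, $\kappa^*(a) < 0 < \tilde{\kappa}^*(b)$, and $t\kappa^*(a) + (1-t)\tilde{\kappa}^*(b) = 0$. -/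
import Mathlib


open Real

/-- Subgradient inequality for a convex differentiable function on `Ioi 0`. -/
lemma subgrad_ineq {f : ℝ → ℝ} (hf : ConvexOn ℝ (Set.Ioi 0) f)
    (hd : ∀ x ∈ Set.Ioi (0 : ℝ), DifferentiableAt ℝ f x)
    {x y : ℝ} (hx : x ∈ Set.Ioi (0 : ℝ)) (hy : y ∈ Set.Ioi (0 : ℝ)) :
    f x + deriv f x * (y - x) ≤ f y := by
  rcases lt_trichotomy x y with h | h | h
  · have := hf.deriv_le_slope hx hy h (hd x hx)
    rw [slope_def_field, le_div_iff₀ (by linarith)] at this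
    nlinarith
  · simp [h]
  · have := hf.slope_le_deriv hy hx h (hd x hx)
    rw [slope_def_field, div_le_iff₀ (by linarith)] at this
    nlinarith

/-- `x ↦ x * f'(x) - f(x)` is strictly monotone on `Ioi 0` for strictly convex `f`. -/
lemma h_strictMono {f : ℝ → ℝ} (hf : StrictConvexOn ℝ (Set.Ioi 0) f)
    (hd : ∀ x ∈ Set.Ioi (0 : ℝ), DifferentiableAt ℝ f x)
    {x y : ℝ} (hx : (0:ℝ) < x) (hxy : x < y) :
    x * deriv f x - f x < y * deriv f y - f y := by
  have hy : (0:ℝ) < y := hx.trans hxy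
  have h1 := hf.deriv_lt_slope (Set.mem_Ioi.2 hx) (Set.mem_Ioi.2 hy) hxy (hd x hx)
  have h2 := hf.slope_lt_deriv (Set.mem_Ioi.2 hx) (Set.mem_Ioi.2 hy) hxy (hd y hy)
  rw [slope_def_field] at h1 h2
  rw [lt_div_iff₀ (by linarith)] at h1
  rw [div_lt_iff₀ (by linarith)] at h2
  nlinarith

/-- **Structure of the fast regime (equation (9)):** if `θ* > θ̃*` and `θ` minimizes
`φ ↦ (t κ(φ) + (1-t) κ̃(φ))/φ` over `(0,∞)`, with `a = κ'(θ)`, `b = κ̃'(θ)`, then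
`θ̃* < θ < θ*`, `κ*(a) < 0 < κ̃*(b)` and `t κ*(a) + (1-t) κ̃*(b) = 0`. -/
theorem fast_regime_structure (κ κt : ℝ → ℝ)
    (hκconv : StrictConvexOn ℝ (Set.Ioi 0) κ) (hκtconv : StrictConvexOn ℝ (Set.Ioi 0) κt)
    (hκdiff : ∀ x ∈ Set.Ioi (0 : ℝ), DifferentiableAt ℝ κ x)
    (hκtdiff : ∀ x ∈ Set.Ioi (0 : ℝ), DifferentiableAt ℝ κt x)
    (θs θts : ℝ) (hθs : 0 < θs) (hθts : 0 < θts)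
    (hcrit : θs * deriv κ θs - κ θs = 0)
    (hcritt : θts * deriv κt θts - κt θts = 0)
    (horder : θts < θs)
    (t : ℝ) (ht : t ∈ Set.Ioo (0 : ℝ) 1)
    (θ : ℝ) (hθ : 0 < θ)
    (hmin : ∀ φ : ℝ, 0 < φ →
      (t * κ θ + (1 - t) * κt θ) / θ ≤ (t * κ φ + (1 - t) * κt φ) / φ)
    (a b : ℝ) (ha : a = deriv κ θ) (hb : b = deriv κt θ) :
    (θts < θ ∧ θ < θs) ∧
    (⨆ φ : Set.Ioi (0 : ℝ), ((φ : ℝ) * a - κ φ)) < 0 ∧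
    0 < (⨆ φ : Set.Ioi (0 : ℝ), ((φ : ℝ) * b - κt φ)) ∧
    t * (⨆ φ : Set.Ioi (0 : ℝ), ((φ : ℝ) * a - κ φ))
      + (1 - t) * (⨆ φ : Set.Ioi (0 : ℝ), ((φ : ℝ) * b - κt φ)) = 0 := by
  obtain ⟨ht0, ht1⟩ := ht
  have hθmem : θ ∈ Set.Ioi (0:ℝ) := hθ
  haveI : Nonempty (Set.Ioi (0:ℝ)) := ⟨⟨θ, hθ⟩⟩
  -- the critical point equation
  have hfderiv : HasDerivAt (fun φ => t * κ φ + (1 - t) * κt φ)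
      (t * deriv κ θ + (1 - t) * deriv κt θ) θ :=
    (((hκdiff θ hθmem).hasDerivAt.const_mul t).add
      ((hκtdiff θ hθmem).hasDerivAt.const_mul (1 - t)))
  have hF : HasDerivAt (fun φ => (t * κ φ + (1 - t) * κt φ) / φ)
      (((t * deriv κ θ + (1 - t) * deriv κt θ) * θ - (t * κ θ + (1 - t) * κt θ) * 1) / θ ^ 2) θ :=
    hfderiv.div (hasDerivAt_id θ) (ne_of_gt hθ)
  have hlm : IsLocalMin (fun φ => (t * κ φ + (1 - t) * κt φ) / φ) θ :=
    Filter.eventually_of_mem (isOpen_Ioi.mem_nhds hθ) (fun y hy => hmin y hy)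
  have h0 : ((t * deriv κ θ + (1 - t) * deriv κt θ) * θ - (t * κ θ + (1 - t) * κt θ) * 1) / θ ^ 2
      = 0 := by rw [← hF.deriv]; exact hlm.deriv_eq_zero
  have hθ2 : (θ:ℝ) ^ 2 ≠ 0 := pow_ne_zero 2 (ne_of_gt hθ)
  rw [div_eq_zero_iff] at h0
  have hAB : t * (θ * a - κ θ) + (1 - t) * (θ * b - κt θ) = 0 := by
    rcases h0 with h0 | h0
    · rw [ha, hb]; ring_nf; ring_nf at h0; linarith
    · exact absurd h0 hθ2
  -- suprema equal the values at θ
  have hbnd1 : ∀ φ : Set.Ioi (0:ℝ), (φ:ℝ) * a - κ φ ≤ θ * a - κ θ := by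
    rintro ⟨φ, hφ⟩
    have := subgrad_ineq hκconv.convexOn hκdiff hθmem hφ
    rw [ha]; simp only; nlinarith
  have hbnd2 : ∀ φ : Set.Ioi (0:ℝ), (φ:ℝ) * b - κt φ ≤ θ * b - κt θ := by
    rintro ⟨φ, hφ⟩
    have := subgrad_ineq hκtconv.convexOn hκtdiff hθmem hφ
    rw [hb]; simp only; nlinarith
  have hsup1 : (⨆ φ : Set.Ioi (0:ℝ), ((φ:ℝ) * a - κ φ)) = θ * a - κ θ := by
    refine le_antisymm (ciSup_le hbnd1) ?_
    exact le_ciSup ⟨θ * a - κ θ, by rintro _ ⟨φ, rfl⟩; exact hbnd1 φ⟩ (⟨θ, hθmem⟩ : Set.Ioi (0:ℝ))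
  have hsup2 : (⨆ φ : Set.Ioi (0:ℝ), ((φ:ℝ) * b - κt φ)) = θ * b - κt θ := by
    refine le_antisymm (ciSup_le hbnd2) ?_
    exact le_ciSup ⟨θ * b - κt θ, by rintro _ ⟨φ, rfl⟩; exact hbnd2 φ⟩ (⟨θ, hθmem⟩ : Set.Ioi (0:ℝ))
  -- ordering: θ < θs
  have hθlt : θ < θs := by
    by_contra hcon
    push_neg at hcon
    have hA : 0 ≤ θ * a - κ θ := by
      rcases lt_or_eq_of_le hcon with h | h
      · have := h_strictMono hκconv hκdiff hθs h
        rw [ha]; linarith [hcrit]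
      · rw [ha, ← h]; linarith [hcrit]
    have hB : θ * b - κt θ ≤ 0 := by nlinarith
    have : θ ≤ θts := by
      by_contra hcon2
      push_neg at hcon2
      have := h_strictMono hκtconv hκtdiff hθts hcon2
      rw [hb] at hB; linarith [hcritt]
    linarith
  have hA : θ * a - κ θ < 0 := by
    have := h_strictMono hκconv hκdiff hθ hθlt
    rw [ha]; linarith [hcrit]
  have hB : 0 < θ * b - κt θ := by nlinarith
  have hθgt : θts < θ := by
    by_contra hcon
    push_neg at hcon
    rcases lt_or_eq_of_le hcon with h | h
    · have := h_strictMono hκtconv hκtdiff hθ h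
      rw [hb] at hB; linarith [hcritt]
    · rw [hb, h] at hB; linarith [hcritt]
  refine ⟨⟨hθgt, hθlt⟩, ?_, ?_, ?_⟩
  · rw [hsup1]; exact hA
  · rw [hsup2]; exact hB
  · rw [hsup1, hsup2]; exact hAB
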